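/- Let n ≥ 1, x_t, x_s, β ∈ ℝⁿ, α ∈ ℝ, ρ_t, ρ_s > 0, σ_t, σ_s > 0, ρ ∈ (−1, 1), and σ_{t,s} = ρσ_tσ_s. Let (U_t, U_s) have the bivariate normal distribution with means x_t'β + ρ_t·α and x_s'β + ρ_s·α, standard deviations σ_t and σ_s, and correlation ρ. Then E[(U_t²U_s − U_s²U_t·(ρ_t/ρ_s) − U_tU_s·(x_t − (ρ_t/ρ_s)x_s)'β + U_t·(σ_s²·(ρ_t/ρ_s) − σ_{t,s}) − U_s·(σ_t² − σ_{t,s}·(ρ_t/ρ_s)))·1{U_t>0, U_s>0}] = 0. -/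

import Mathlib

open MeasureTheory Real Set Filter Topology

noncomputable def binormalPDF (μ₁ μ₂ σ₁ σ₂ ρ u₁ u₂ : ℝ) : ℝ :=
  (1 / (2 * Real.pi * σ₁ * σ₂ * Real.sqrt (1 - ρ ^ 2))) *
    Real.exp (-(1 / (2 * (1 - ρ ^ 2))) *
      ((u₁ - μ₁) ^ 2 / σ₁ ^ 2 - 2 * ρ * (u₁ - μ₁) * (u₂ - μ₂) / (σ₁ * σ₂)
        + (u₂ - μ₂) ^ 2 / σ₂ ^ 2))


lemma aux_gauss_int (i : ℕ) {δ : ℝ} (hδ : 0 < δ) (μ : ℝ) :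
    Integrable fun u : ℝ => |u| ^ i * Real.exp (-δ * (u - μ) ^ 2) := by
  have h1 : Integrable fun x : ℝ => |x| ^ i * Real.exp (-δ * x ^ 2) := by
    have := (integrable_rpow_mul_exp_neg_mul_sq hδ (s := (i : ℝ))
      (lt_of_lt_of_le (by norm_num) (Nat.cast_nonneg i))).abs
    refine this.congr (Filter.Eventually.of_forall fun x => ?_)
    simp [Real.rpow_natCast, abs_mul, abs_pow, abs_of_nonneg (Real.exp_pos _).le]
  have h2 : Integrable fun x : ℝ =>
      (2:ℝ) ^ i * (|x| ^ i * Real.exp (-δ * x ^ 2)) + (2:ℝ) ^ i * |μ| ^ i * Real.exp (-δ * x ^ 2) :=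
    (h1.const_mul _).add ((integrable_exp_neg_mul_sq hδ).const_mul _)
  have h3 : Integrable fun x : ℝ => |x + μ| ^ i * Real.exp (-δ * x ^ 2) := by
    refine h2.mono' ?_ (Filter.Eventually.of_forall fun x => ?_)
    · exact (((continuous_abs.comp (continuous_id.add continuous_const)).pow i).mul
        (Real.continuous_exp.comp (continuous_const.mul (continuous_pow 2)))).aestronglyMeasurable
    · have hb : |x + μ| ^ i ≤ 2 ^ i * (|x| ^ i + |μ| ^ i) := by
        calc |x + μ| ^ i ≤ (|x| + |μ|) ^ i :=
              pow_le_pow_left₀ (abs_nonneg _) (abs_add_le x μ) i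
          _ ≤ (2 * max |x| |μ|) ^ i := by
              refine pow_le_pow_left₀ (by positivity) ?_ i
              linarith [le_max_left |x| |μ|, le_max_right |x| |μ|]
          _ = 2 ^ i * max |x| |μ| ^ i := by rw [mul_pow]
          _ ≤ 2 ^ i * (|x| ^ i + |μ| ^ i) := by
              refine mul_le_mul_of_nonneg_left ?_ (by positivity)
              rcases le_total |x| |μ| with h | h
              · rw [max_eq_right h]; nlinarith [pow_nonneg (abs_nonneg x) i]
              · rw [max_eq_left h]; nlinarith [pow_nonneg (abs_nonneg μ) i]
      have he : (0:ℝ) < Real.exp (-δ * x ^ 2) := Real.exp_pos _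
      rw [Real.norm_eq_abs, abs_mul, abs_of_nonneg he.le, abs_of_nonneg (by positivity)]
      calc |x + μ| ^ i * Real.exp (-δ * x ^ 2)
          ≤ (2 ^ i * (|x| ^ i + |μ| ^ i)) * Real.exp (-δ * x ^ 2) :=
            mul_le_mul_of_nonneg_right hb he.le
        _ = 2 ^ i * (|x| ^ i * Real.exp (-δ * x ^ 2)) + 2 ^ i * |μ| ^ i * Real.exp (-δ * x ^ 2) := by
            ring
  have := h3.comp_sub_right μ
  refine this.congr (Filter.Eventually.of_forall fun x => ?_)
  simp [sub_add_cancel]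

lemma aux_gauss_tendsto {δ : ℝ} (hδ : 0 < δ) (μ : ℝ) :
    Tendsto (fun u : ℝ => |u| * Real.exp (-δ * (u - μ) ^ 2)) atTop (𝓝 0) := by
  have hg : Tendsto (fun u : ℝ => u * Real.exp (-u)) atTop (𝓝 0) := by
    simpa using tendsto_pow_mul_exp_neg_atTop_nhds_zero 1
  refine squeeze_zero' (Filter.Eventually.of_forall fun u => by positivity) ?_ hg
  filter_upwards [eventually_ge_atTop (max (2 * |μ|) (μ + 2 / δ))] with u hu
  have h1 : 2 * |μ| ≤ u := le_trans (le_max_left _ _) hu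
  have h2 : μ + 2 / δ ≤ u := le_trans (le_max_right _ _) hu
  have hu0 : 0 ≤ u := by have := abs_nonneg μ; linarith
  have hμ : μ ≤ |μ| := le_abs_self μ
  have hμ' : -|μ| ≤ μ := neg_abs_le μ
  have hkey : u ≤ δ * (u - μ) ^ 2 := by
    have h3 : u / 2 ≤ u - μ := by linarith
    calc u = δ * (u / 2 * (2 / δ)) := by field_simp
      _ ≤ δ * ((u - μ) * (u - μ)) := by
          refine mul_le_mul_of_nonneg_left ?_ hδ.le
          exact mul_le_mul h3 (by linarith) (by positivity) (by linarith)
      _ = δ * (u - μ) ^ 2 := by ring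
  rw [abs_of_nonneg hu0]
  exact mul_le_mul (le_refl u) (by rw [Real.exp_le_exp]; linarith) (Real.exp_pos _).le hu0

noncomputable def bnD (μ₁ μ₂ σ₁ σ₂ ρ a u v : ℝ) : ℝ :=
  a * v * binormalPDF μ₁ μ₂ σ₁ σ₂ ρ u v +
    a * u * v * (binormalPDF μ₁ μ₂ σ₁ σ₂ ρ u v *
      (-(1 / (1 - ρ ^ 2)) * ((u - μ₁) / σ₁ ^ 2 - ρ * (v - μ₂) / (σ₁ * σ₂))))

set_option linter.unusedSectionVars false
section BN
variable {μ₁ μ₂ σ₁ σ₂ ρ : ℝ} (hσ₁ : 0 < σ₁) (hσ₂ : 0 < σ₂) (hρ1 : -1 < ρ) (hρ2 : ρ < 1)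

include hσ₁ hσ₂ hρ1 hρ2

lemma bn_nonneg (u v : ℝ) : 0 ≤ binormalPDF μ₁ μ₂ σ₁ σ₂ ρ u v := by
  have hK : 0 < 1 - ρ ^ 2 := by nlinarith
  unfold binormalPDF
  have : 0 < Real.sqrt (1 - ρ ^ 2) := Real.sqrt_pos.2 hK
  positivity

lemma bn_symm (u v : ℝ) :
    binormalPDF μ₁ μ₂ σ₁ σ₂ ρ u v = binormalPDF μ₂ μ₁ σ₂ σ₁ ρ v u := by
  unfold binormalPDF; ring_nf

lemma bn_continuous : Continuous fun p : ℝ × ℝ => binormalPDF μ₁ μ₂ σ₁ σ₂ ρ p.1 p.2 := by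
  unfold binormalPDF
  fun_prop

lemma bn_le (u v : ℝ) :
    binormalPDF μ₁ μ₂ σ₁ σ₂ ρ u v ≤
      (1 / (2 * Real.pi * σ₁ * σ₂ * Real.sqrt (1 - ρ ^ 2))) *
        (Real.exp (-((1 - |ρ|) / (2 * (1 - ρ ^ 2) * max σ₁ σ₂ ^ 2)) * (u - μ₁) ^ 2) *
         Real.exp (-((1 - |ρ|) / (2 * (1 - ρ ^ 2) * max σ₁ σ₂ ^ 2)) * (v - μ₂) ^ 2)) := by
  have hK : 0 < 1 - ρ ^ 2 := by nlinarith
  have hM : 0 < max σ₁ σ₂ := lt_of_lt_of_le hσ₁ (le_max_left _ _)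
  have hρa : |ρ| < 1 := abs_lt.2 ⟨hρ1, hρ2⟩
  unfold binormalPDF
  rw [← Real.exp_add]
  refine mul_le_mul_of_nonneg_left ?_ (by
    have : 0 < Real.sqrt (1 - ρ ^ 2) := Real.sqrt_pos.2 hK
    positivity)
  rw [Real.exp_le_exp]
  set s := u - μ₁
  set t := v - μ₂
  have h1 : (1 - |ρ|) * (s ^ 2 / σ₁ ^ 2 + t ^ 2 / σ₂ ^ 2) ≤
      s ^ 2 / σ₁ ^ 2 - 2 * ρ * s * t / (σ₁ * σ₂) + t ^ 2 / σ₂ ^ 2 := by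
    have hr1 : 0 ≤ |ρ| - ρ := by linarith [le_abs_self ρ]
    have hr2 : 0 ≤ |ρ| + ρ := by linarith [neg_abs_le ρ]
    have key : (1 - |ρ|) * ((s / σ₁) ^ 2 + (t / σ₂) ^ 2) ≤
        (s / σ₁) ^ 2 - 2 * ρ * (s / σ₁) * (t / σ₂) + (t / σ₂) ^ 2 := by
      nlinarith [mul_nonneg hr1 (sq_nonneg (s / σ₁ - t / σ₂)),
        mul_nonneg hr2 (sq_nonneg (s / σ₁ + t / σ₂))]
    have e1 : (s / σ₁) ^ 2 = s ^ 2 / σ₁ ^ 2 := div_pow s σ₁ 2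
    have e2 : (t / σ₂) ^ 2 = t ^ 2 / σ₂ ^ 2 := div_pow t σ₂ 2
    have e3 : 2 * ρ * (s / σ₁) * (t / σ₂) = 2 * ρ * s * t / (σ₁ * σ₂) := by
      field_simp
    rw [e1, e2, e3] at key
    exact key
  have h2 : s ^ 2 / max σ₁ σ₂ ^ 2 ≤ s ^ 2 / σ₁ ^ 2 := by
    apply div_le_div_of_nonneg_left (sq_nonneg s) (by positivity)
    exact pow_le_pow_left₀ hσ₁.le (le_max_left _ _) 2
  have h3 : t ^ 2 / max σ₁ σ₂ ^ 2 ≤ t ^ 2 / σ₂ ^ 2 := by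
    apply div_le_div_of_nonneg_left (sq_nonneg t) (by positivity)
    exact pow_le_pow_left₀ hσ₂.le (le_max_right _ _) 2
  have h4 : (1 - |ρ|) * (s ^ 2 / max σ₁ σ₂ ^ 2 + t ^ 2 / max σ₁ σ₂ ^ 2) ≤
      (1 - |ρ|) * (s ^ 2 / σ₁ ^ 2 + t ^ 2 / σ₂ ^ 2) := by
    apply mul_le_mul_of_nonneg_left (by linarith) (by linarith)
  have h5 : (1 - |ρ|) * (s ^ 2 / max σ₁ σ₂ ^ 2 + t ^ 2 / max σ₁ σ₂ ^ 2) ≤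
      s ^ 2 / σ₁ ^ 2 - 2 * ρ * s * t / (σ₁ * σ₂) + t ^ 2 / σ₂ ^ 2 := le_trans h4 h1
  have hgoal : -(1 / (2 * (1 - ρ ^ 2))) *
      (s ^ 2 / σ₁ ^ 2 - 2 * ρ * s * t / (σ₁ * σ₂) + t ^ 2 / σ₂ ^ 2) ≤
      -((1 - |ρ|) / (2 * (1 - ρ ^ 2) * max σ₁ σ₂ ^ 2)) * s ^ 2 +
      -((1 - |ρ|) / (2 * (1 - ρ ^ 2) * max σ₁ σ₂ ^ 2)) * t ^ 2 := by
    rw [neg_mul, neg_mul, neg_mul, ← neg_add, neg_le_neg_iff]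
    have heq : (1 - |ρ|) / (2 * (1 - ρ ^ 2) * max σ₁ σ₂ ^ 2) * s ^ 2 +
        (1 - |ρ|) / (2 * (1 - ρ ^ 2) * max σ₁ σ₂ ^ 2) * t ^ 2 =
        (1 / (2 * (1 - ρ ^ 2))) *
          ((1 - |ρ|) * (s ^ 2 / max σ₁ σ₂ ^ 2 + t ^ 2 / max σ₁ σ₂ ^ 2)) := by
      field_simp
    rw [heq]
    exact mul_le_mul_of_nonneg_left h5 (by positivity)
  exact hgoal

lemma bn_hasDerivAt_pdf (v u : ℝ) :
    HasDerivAt (fun x => binormalPDF μ₁ μ₂ σ₁ σ₂ ρ x v)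
      (binormalPDF μ₁ μ₂ σ₁ σ₂ ρ u v *
        (-(1 / (1 - ρ ^ 2)) * ((u - μ₁) / σ₁ ^ 2 - ρ * (v - μ₂) / (σ₁ * σ₂)))) u := by
  have h0 : HasDerivAt (fun x : ℝ => x - μ₁) 1 u := (hasDerivAt_id u).sub_const μ₁
  have h1 : HasDerivAt (fun x : ℝ => (x - μ₁) ^ 2) (2 * (u - μ₁)) u := by
    simpa using h0.fun_pow 2
  have h2 : HasDerivAt (fun x : ℝ => (x - μ₁) ^ 2 / σ₁ ^ 2) (2 * (u - μ₁) / σ₁ ^ 2) u :=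
    h1.div_const _
  have h3 : HasDerivAt (fun x : ℝ => 2 * ρ * (x - μ₁) * (v - μ₂) / (σ₁ * σ₂))
      (2 * ρ * 1 * (v - μ₂) / (σ₁ * σ₂)) u :=
    (((h0.const_mul (2 * ρ)).mul_const (v - μ₂)).div_const _)
  have h4 := (h2.sub h3).add_const ((v - μ₂) ^ 2 / σ₂ ^ 2)
  have h5 := h4.const_mul (-(1 / (2 * (1 - ρ ^ 2))))
  have h6 := h5.exp
  have h7 := h6.const_mul (1 / (2 * Real.pi * σ₁ * σ₂ * Real.sqrt (1 - ρ ^ 2)))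
  simp only [binormalPDF]
  refine h7.congr_deriv ?_
  symm
  have hK : (1 - ρ ^ 2) ≠ 0 := by nlinarith
  have hσ₁' : σ₁ ≠ 0 := hσ₁.ne'
  have hσ₂' : σ₂ ≠ 0 := hσ₂.ne'
  rw [mul_assoc]
  congr 1
  congr 1
  field_simp

lemma bn_hasDerivAt (a v u : ℝ) :
    HasDerivAt (fun x => a * x * v * binormalPDF μ₁ μ₂ σ₁ σ₂ ρ x v)
      (a * v * binormalPDF μ₁ μ₂ σ₁ σ₂ ρ u v +
        a * u * v * (binormalPDF μ₁ μ₂ σ₁ σ₂ ρ u v *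
          (-(1 / (1 - ρ ^ 2)) * ((u - μ₁) / σ₁ ^ 2 - ρ * (v - μ₂) / (σ₁ * σ₂))))) u := by
  have hlin : HasDerivAt (fun x : ℝ => a * x * v) (a * v) u := by
    simpa using ((hasDerivAt_id u).const_mul a).mul_const v
  have := hlin.mul (bn_hasDerivAt_pdf (μ₁ := μ₁) (μ₂ := μ₂) hσ₁ hσ₂ hρ1 hρ2 v u)
  exact this

lemma bn_delta_pos : 0 < (1 - |ρ|) / (2 * (1 - ρ ^ 2) * max σ₁ σ₂ ^ 2) := by
  have hρa : |ρ| < 1 := abs_lt.2 ⟨hρ1, hρ2⟩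
  have hK : 0 < 1 - ρ ^ 2 := by nlinarith
  have hM : 0 < max σ₁ σ₂ := lt_of_lt_of_le hσ₁ (le_max_left _ _)
  have h1 : 0 < 1 - |ρ| := by linarith
  exact div_pos h1 (by positivity)

lemma bn_monomial_integrable (i j : ℕ) :
    Integrable (fun p : ℝ × ℝ => p.1 ^ i * p.2 ^ j * binormalPDF μ₁ μ₂ σ₁ σ₂ ρ p.1 p.2) := by
  set δ := (1 - |ρ|) / (2 * (1 - ρ ^ 2) * max σ₁ σ₂ ^ 2) with hδdef
  have hδ : 0 < δ := bn_delta_pos hσ₁ hσ₂ hρ1 hρ2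
  set C := 1 / (2 * Real.pi * σ₁ * σ₂ * Real.sqrt (1 - ρ ^ 2)) with hCdef
  have hint : Integrable (fun p : ℝ × ℝ =>
      (C * (|p.1| ^ i * Real.exp (-δ * (p.1 - μ₁) ^ 2))) *
        (|p.2| ^ j * Real.exp (-δ * (p.2 - μ₂) ^ 2))) := by
    rw [MeasureTheory.Measure.volume_eq_prod]
    exact ((aux_gauss_int i hδ μ₁).const_mul C).mul_prod (aux_gauss_int j hδ μ₂)
  refine hint.mono' ?_ (Filter.Eventually.of_forall fun p => ?_)
  · exact ((((continuous_fst.pow i).mul (continuous_snd.pow j)).mul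
      (bn_continuous (μ₁ := μ₁) (μ₂ := μ₂) hσ₁ hσ₂ hρ1 hρ2)).aestronglyMeasurable)
  · have h0 := bn_nonneg (μ₁ := μ₁) (μ₂ := μ₂) hσ₁ hσ₂ hρ1 hρ2 p.1 p.2
    have hle := bn_le (μ₁ := μ₁) (μ₂ := μ₂) hσ₁ hσ₂ hρ1 hρ2 p.1 p.2
    rw [Real.norm_eq_abs, abs_mul, abs_mul, abs_pow, abs_pow, abs_of_nonneg h0]
    calc |p.1| ^ i * |p.2| ^ j * binormalPDF μ₁ μ₂ σ₁ σ₂ ρ p.1 p.2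
        ≤ |p.1| ^ i * |p.2| ^ j *
          (C * (Real.exp (-δ * (p.1 - μ₁) ^ 2) * Real.exp (-δ * (p.2 - μ₂) ^ 2))) := by
          exact mul_le_mul_of_nonneg_left hle (by positivity)
      _ = (C * (|p.1| ^ i * Real.exp (-δ * (p.1 - μ₁) ^ 2))) *
          (|p.2| ^ j * Real.exp (-δ * (p.2 - μ₂) ^ 2)) := by ring

lemma bn_monomial_integrable_fst (i : ℕ) (v : ℝ) :
    Integrable (fun u : ℝ => u ^ i * binormalPDF μ₁ μ₂ σ₁ σ₂ ρ u v) := by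
  set δ := (1 - |ρ|) / (2 * (1 - ρ ^ 2) * max σ₁ σ₂ ^ 2) with hδdef
  have hδ : 0 < δ := bn_delta_pos hσ₁ hσ₂ hρ1 hρ2
  set C := 1 / (2 * Real.pi * σ₁ * σ₂ * Real.sqrt (1 - ρ ^ 2)) with hCdef
  refine ((aux_gauss_int i hδ μ₁).const_mul C).mono' ?_
    (Filter.Eventually.of_forall fun u => ?_)
  · exact ((continuous_pow i).mul ((bn_continuous (μ₁ := μ₁) (μ₂ := μ₂) hσ₁ hσ₂ hρ1 hρ2).comp
      (continuous_id.prodMk continuous_const))).aestronglyMeasurable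
  · have h0 := bn_nonneg (μ₁ := μ₁) (μ₂ := μ₂) hσ₁ hσ₂ hρ1 hρ2 u v
    have hle := bn_le (μ₁ := μ₁) (μ₂ := μ₂) hσ₁ hσ₂ hρ1 hρ2 u v
    have hexp1 : Real.exp (-δ * (v - μ₂) ^ 2) ≤ 1 := by
      rw [Real.exp_le_one_iff]
      nlinarith [sq_nonneg (v - μ₂)]
    rw [Real.norm_eq_abs, abs_mul, abs_pow, abs_of_nonneg h0]
    calc |u| ^ i * binormalPDF μ₁ μ₂ σ₁ σ₂ ρ u v
        ≤ |u| ^ i * (C * (Real.exp (-δ * (u - μ₁) ^ 2) * Real.exp (-δ * (v - μ₂) ^ 2))) :=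
          mul_le_mul_of_nonneg_left hle (by positivity)
      _ ≤ |u| ^ i * (C * (Real.exp (-δ * (u - μ₁) ^ 2) * 1)) := by
          have hC : 0 < C := by
            have hK : 0 < 1 - ρ ^ 2 := by nlinarith
            have : 0 < Real.sqrt (1 - ρ ^ 2) := Real.sqrt_pos.2 hK
            rw [hCdef]; positivity
          gcongr
      _ = C * (|u| ^ i * Real.exp (-δ * (u - μ₁) ^ 2)) := by ring

lemma bn_tendsto (a v : ℝ) :
    Tendsto (fun u : ℝ => a * u * v * binormalPDF μ₁ μ₂ σ₁ σ₂ ρ u v) atTop (𝓝 0) := by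
  set δ := (1 - |ρ|) / (2 * (1 - ρ ^ 2) * max σ₁ σ₂ ^ 2) with hδdef
  have hδ : 0 < δ := bn_delta_pos hσ₁ hσ₂ hρ1 hρ2
  set C := 1 / (2 * Real.pi * σ₁ * σ₂ * Real.sqrt (1 - ρ ^ 2)) with hCdef
  have hC : 0 < C := by
    have hK : 0 < 1 - ρ ^ 2 := by nlinarith
    have : 0 < Real.sqrt (1 - ρ ^ 2) := Real.sqrt_pos.2 hK
    rw [hCdef]; positivity
  have hg : Tendsto (fun u : ℝ => (|a| * |v| * C) *
      (|u| * Real.exp (-δ * (u - μ₁) ^ 2))) atTop (𝓝 0) := by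
    have := (aux_gauss_tendsto hδ μ₁).const_mul (|a| * |v| * C)
    simpa using this
  refine squeeze_zero_norm (fun u => ?_) hg
  have h0 := bn_nonneg (μ₁ := μ₁) (μ₂ := μ₂) hσ₁ hσ₂ hρ1 hρ2 u v
  have hle := bn_le (μ₁ := μ₁) (μ₂ := μ₂) hσ₁ hσ₂ hρ1 hρ2 u v
  have hexp1 : Real.exp (-δ * (v - μ₂) ^ 2) ≤ 1 := by
    rw [Real.exp_le_one_iff]
    nlinarith [sq_nonneg (v - μ₂)]
  rw [Real.norm_eq_abs, abs_mul, abs_mul, abs_mul, abs_of_nonneg h0]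
  calc |a| * |u| * |v| * binormalPDF μ₁ μ₂ σ₁ σ₂ ρ u v
      ≤ |a| * |u| * |v| * (C * (Real.exp (-δ * (u - μ₁) ^ 2) * Real.exp (-δ * (v - μ₂) ^ 2))) :=
        mul_le_mul_of_nonneg_left hle (by positivity)
    _ ≤ |a| * |u| * |v| * (C * (Real.exp (-δ * (u - μ₁) ^ 2) * 1)) := by
        gcongr
    _ = (|a| * |v| * C) * (|u| * Real.exp (-δ * (u - μ₁) ^ 2)) := by ring

lemma bn_comb2 (c1 c2 c3 c4 c5 : ℝ) :
    Integrable (fun p : ℝ × ℝ =>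
      c1 * (p.2 * binormalPDF μ₁ μ₂ σ₁ σ₂ ρ p.1 p.2) +
      c2 * (p.1 * binormalPDF μ₁ μ₂ σ₁ σ₂ ρ p.1 p.2) +
      c3 * (p.1 * p.2 * binormalPDF μ₁ μ₂ σ₁ σ₂ ρ p.1 p.2) +
      c4 * (p.1 ^ 2 * p.2 * binormalPDF μ₁ μ₂ σ₁ σ₂ ρ p.1 p.2) +
      c5 * (p.1 * p.2 ^ 2 * binormalPDF μ₁ μ₂ σ₁ σ₂ ρ p.1 p.2)) := by
  have h01 := (bn_monomial_integrable (μ₁ := μ₁) (μ₂ := μ₂) hσ₁ hσ₂ hρ1 hρ2 0 1).const_mul c1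
  have h10 := (bn_monomial_integrable (μ₁ := μ₁) (μ₂ := μ₂) hσ₁ hσ₂ hρ1 hρ2 1 0).const_mul c2
  have h11 := (bn_monomial_integrable (μ₁ := μ₁) (μ₂ := μ₂) hσ₁ hσ₂ hρ1 hρ2 1 1).const_mul c3
  have h21 := (bn_monomial_integrable (μ₁ := μ₁) (μ₂ := μ₂) hσ₁ hσ₂ hρ1 hρ2 2 1).const_mul c4
  have h12 := (bn_monomial_integrable (μ₁ := μ₁) (μ₂ := μ₂) hσ₁ hσ₂ hρ1 hρ2 1 2).const_mul c5
  refine ((((h01.add h10).add h11).add h21).add h12).congr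
    (Filter.Eventually.of_forall fun p => ?_)
  simp only [Pi.add_apply]
  ring

lemma bn_comb1 (e0 e1 e2 : ℝ) (v : ℝ) :
    Integrable (fun u : ℝ =>
      e0 * binormalPDF μ₁ μ₂ σ₁ σ₂ ρ u v +
      e1 * (u * binormalPDF μ₁ μ₂ σ₁ σ₂ ρ u v) +
      e2 * (u ^ 2 * binormalPDF μ₁ μ₂ σ₁ σ₂ ρ u v)) := by
  have h0 := (bn_monomial_integrable_fst (μ₁ := μ₁) (μ₂ := μ₂) hσ₁ hσ₂ hρ1 hρ2 0 v).const_mul e0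
  have h1 := (bn_monomial_integrable_fst (μ₁ := μ₁) (μ₂ := μ₂) hσ₁ hσ₂ hρ1 hρ2 1 v).const_mul e1
  have h2 := (bn_monomial_integrable_fst (μ₁ := μ₁) (μ₂ := μ₂) hσ₁ hσ₂ hρ1 hρ2 2 v).const_mul e2
  refine ((h0.add h1).add h2).congr (Filter.Eventually.of_forall fun u => ?_)
  simp only [Pi.add_apply]
  ring

lemma bnD_integrable2 (a : ℝ) :
    Integrable (fun p : ℝ × ℝ => bnD μ₁ μ₂ σ₁ σ₂ ρ a p.1 p.2) := by
  have hK : (1 - ρ ^ 2) ≠ 0 := by nlinarith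
  have hσ₁' : σ₁ ≠ 0 := hσ₁.ne'
  have hσ₂' : σ₂ ≠ 0 := hσ₂.ne'
  refine (bn_comb2 (μ₁ := μ₁) (μ₂ := μ₂) hσ₁ hσ₂ hρ1 hρ2 a 0
      (a * μ₁ / ((1 - ρ ^ 2) * σ₁ ^ 2) - a * ρ * μ₂ / ((1 - ρ ^ 2) * σ₁ * σ₂))
      (-(a / ((1 - ρ ^ 2) * σ₁ ^ 2)))
      (a * ρ / ((1 - ρ ^ 2) * σ₁ * σ₂))).congr
    (Filter.Eventually.of_forall fun p => ?_)
  simp only [bnD]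
  field_simp
  ring

lemma bnD_integrable2_swap (a : ℝ) :
    Integrable (fun p : ℝ × ℝ => bnD μ₂ μ₁ σ₂ σ₁ ρ a p.2 p.1) := by
  have hK : (1 - ρ ^ 2) ≠ 0 := by nlinarith
  have hσ₁' : σ₁ ≠ 0 := hσ₁.ne'
  have hσ₂' : σ₂ ≠ 0 := hσ₂.ne'
  refine (bn_comb2 (μ₁ := μ₁) (μ₂ := μ₂) hσ₁ hσ₂ hρ1 hρ2 0 a
      (a * μ₂ / ((1 - ρ ^ 2) * σ₂ ^ 2) - a * ρ * μ₁ / ((1 - ρ ^ 2) * σ₂ * σ₁))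
      (a * ρ / ((1 - ρ ^ 2) * σ₂ * σ₁))
      (-(a / ((1 - ρ ^ 2) * σ₂ ^ 2)))).congr
    (Filter.Eventually.of_forall fun p => ?_)
  simp only [bnD]
  rw [show binormalPDF μ₂ μ₁ σ₂ σ₁ ρ p.2 p.1 = binormalPDF μ₁ μ₂ σ₁ σ₂ ρ p.1 p.2 from
    (bn_symm hσ₁ hσ₂ hρ1 hρ2 (μ₁ := μ₁) (μ₂ := μ₂) p.1 p.2).symm]
  field_simp
  ring

lemma bnD_integrableOn_fst (a v : ℝ) :
    IntegrableOn (fun u : ℝ => bnD μ₁ μ₂ σ₁ σ₂ ρ a u v) (Set.Ioi 0) := by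
  have hK : (1 - ρ ^ 2) ≠ 0 := by nlinarith
  have hσ₁' : σ₁ ≠ 0 := hσ₁.ne'
  have hσ₂' : σ₂ ≠ 0 := hσ₂.ne'
  refine ((bn_comb1 (μ₁ := μ₁) (μ₂ := μ₂) hσ₁ hσ₂ hρ1 hρ2 (a * v)
      ((a * μ₁ / ((1 - ρ ^ 2) * σ₁ ^ 2) - a * ρ * μ₂ / ((1 - ρ ^ 2) * σ₁ * σ₂)) * v +
        (a * ρ / ((1 - ρ ^ 2) * σ₁ * σ₂)) * v ^ 2)
      (-(a / ((1 - ρ ^ 2) * σ₁ ^ 2)) * v) v).congr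
    (Filter.Eventually.of_forall fun u => ?_)).integrableOn
  simp only [bnD]
  field_simp
  ring

lemma bnD_integral_Ioi_zero (a v : ℝ) :
    ∫ u in Set.Ioi (0 : ℝ), bnD μ₁ μ₂ σ₁ σ₂ ρ a u v = 0 := by
  have hpdfc : Continuous (fun u : ℝ => binormalPDF μ₁ μ₂ σ₁ σ₂ ρ u v) := by
    unfold binormalPDF; fun_prop
  have hcont : ContinuousWithinAt (fun u : ℝ => a * u * v * binormalPDF μ₁ μ₂ σ₁ σ₂ ρ u v)
      (Set.Ici 0) 0 :=
    (Continuous.mul ((continuous_const.mul continuous_id).mul continuous_const)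
      hpdfc).continuousWithinAt
  have hder : ∀ x ∈ Set.Ioi (0 : ℝ),
      HasDerivAt (fun u : ℝ => a * u * v * binormalPDF μ₁ μ₂ σ₁ σ₂ ρ u v)
        (bnD μ₁ μ₂ σ₁ σ₂ ρ a x v) x := by
    intro x _
    have h := bn_hasDerivAt (μ₁ := μ₁) (μ₂ := μ₂) hσ₁ hσ₂ hρ1 hρ2 a v x
    rw [bnD]
    exact h
  have hint := bnD_integrableOn_fst (μ₁ := μ₁) (μ₂ := μ₂) hσ₁ hσ₂ hρ1 hρ2 a v
  have htend := bn_tendsto (μ₁ := μ₁) (μ₂ := μ₂) hσ₁ hσ₂ hρ1 hρ2 a v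
  have h0 := integral_Ioi_of_hasDerivAt_of_tendsto hcont hder hint htend
  simpa using h0

end BN

/-- Moment condition (Estm_fl) for the factor-loading fixed-effects panel Tobit model:
with `(U_t, U_s)` bivariate normal with means `x_t'β + ρ_t α`, `x_s'β + ρ_s α`, standard
deviations `σ_t, σ_s`, and correlation `ρ` (covariance `σ_{t,s} = ρσ_tσ_s`),
`E[(U_t²U_s − U_s²U_t(ρ_t/ρ_s) − U_tU_s(x_t − (ρ_t/ρ_s)x_s)'β + U_t(σ_s²(ρ_t/ρ_s) − σ_{t,s})
   − U_s(σ_t² − σ_{t,s}(ρ_t/ρ_s)))·1{U_t>0,U_s>0}] = 0`. -/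
theorem panel_tobit_factor_loading_moment (n : ℕ) (hn : 1 ≤ n) (xt xs β : Fin n → ℝ) (α : ℝ)
    (ρt ρs : ℝ) (hρt : 0 < ρt) (hρs : 0 < ρs)
    (σt σs ρ : ℝ) (hσt : 0 < σt) (hσs : 0 < σs) (hρ : ρ ∈ Set.Ioo (-1 : ℝ) 1)
    (σts : ℝ) (hσts : σts = ρ * σt * σs) :
    ∫ p in Set.Ioi (0 : ℝ) ×ˢ Set.Ioi (0 : ℝ),
        (p.1 ^ 2 * p.2 - p.2 ^ 2 * p.1 * (ρt / ρs)
            - p.1 * p.2 * (∑ i, (xt i - (ρt / ρs) * xs i) * β i)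
            + p.1 * (σs ^ 2 * (ρt / ρs) - σts)
            - p.2 * (σt ^ 2 - σts * (ρt / ρs)))
          * binormalPDF (∑ i, xt i * β i + ρt * α) (∑ i, xs i * β i + ρs * α)
              σt σs ρ p.1 p.2 = 0 := by
  obtain ⟨hρ1, hρ2⟩ := hρ
  set μ₁ := ∑ i, xt i * β i + ρt * α with hμ₁
  set μ₂ := ∑ i, xs i * β i + ρs * α with hμ₂
  set c := ρt / ρs with hc
  have hcρs : c * ρs = ρt := div_mul_cancel₀ ρt hρs.ne'
  have hsum : ∑ i, (xt i - c * xs i) * β i = μ₁ - c * μ₂ := by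
    have h1 : ∑ i, (xt i - c * xs i) * β i
        = (∑ i, xt i * β i) - c * ∑ i, xs i * β i := by
      rw [Finset.mul_sum, ← Finset.sum_sub_distrib]
      exact Finset.sum_congr rfl fun i _ => by ring
    have h2 : μ₁ - c * μ₂ = (∑ i, xt i * β i) - c * (∑ i, xs i * β i) + (ρt - c * ρs) * α := by
      rw [hμ₁, hμ₂]; ring
    rw [h1, h2, hcρs]
    ring
  set A := σt ^ 2 - c * σts with hA
  set B := σts - c * σs ^ 2 with hB
  have key : ∀ p : ℝ × ℝ,
      (p.1 ^ 2 * p.2 - p.2 ^ 2 * p.1 * c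
          - p.1 * p.2 * (∑ i, (xt i - c * xs i) * β i)
          + p.1 * (σs ^ 2 * c - σts)
          - p.2 * (σt ^ 2 - σts * c))
        * binormalPDF μ₁ μ₂ σt σs ρ p.1 p.2
      = -(bnD μ₁ μ₂ σt σs ρ A p.1 p.2) - bnD μ₂ μ₁ σs σt ρ B p.2 p.1 := by
    intro p
    rw [hsum]
    simp only [bnD, hA, hB, hσts]
    rw [show binormalPDF μ₂ μ₁ σs σt ρ p.2 p.1 = binormalPDF μ₁ μ₂ σt σs ρ p.1 p.2 from
      (bn_symm (μ₁ := μ₁) (μ₂ := μ₂) hσt hσs hρ1 hρ2 p.1 p.2).symm]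
    have hK : (1 - ρ ^ 2) ≠ 0 := by nlinarith
    have hσt' : σt ≠ 0 := hσt.ne'
    have hσs' : σs ≠ 0 := hσs.ne'
    field_simp
    ring
  simp only [key]
  have hint₁ : Integrable (fun p : ℝ × ℝ => bnD μ₁ μ₂ σt σs ρ A p.1 p.2) :=
    bnD_integrable2 (μ₁ := μ₁) (μ₂ := μ₂) hσt hσs hρ1 hρ2 A
  have hint₂ : Integrable (fun p : ℝ × ℝ => bnD μ₂ μ₁ σs σt ρ B p.2 p.1) :=
    bnD_integrable2_swap (μ₁ := μ₁) (μ₂ := μ₂) hσt hσs hρ1 hρ2 B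
  have hneg : Integrable (fun p : ℝ × ℝ => -(bnD μ₁ μ₂ σt σs ρ A p.1 p.2)) := by
    exact hint₁.neg
  rw [integral_sub hneg.integrableOn hint₂.integrableOn, integral_neg]
  have hz₁ : ∫ p in Set.Ioi (0 : ℝ) ×ˢ Set.Ioi (0 : ℝ),
      bnD μ₁ μ₂ σt σs ρ A p.1 p.2 = 0 := by
    have hInt : Integrable (fun p : ℝ × ℝ => bnD μ₁ μ₂ σt σs ρ A p.1 p.2)
        ((volume.restrict (Set.Ioi 0)).prod (volume.restrict (Set.Ioi 0))) := by
      rw [MeasureTheory.Measure.prod_restrict, ← MeasureTheory.Measure.volume_eq_prod]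
      exact hint₁.integrableOn
    calc ∫ p in Set.Ioi (0 : ℝ) ×ˢ Set.Ioi (0 : ℝ), bnD μ₁ μ₂ σt σs ρ A p.1 p.2
        = ∫ p, bnD μ₁ μ₂ σt σs ρ A p.1 p.2
            ∂((volume.restrict (Set.Ioi 0)).prod (volume.restrict (Set.Ioi 0))) := by
          rw [MeasureTheory.Measure.prod_restrict, ← MeasureTheory.Measure.volume_eq_prod]
      _ = ∫ y in Set.Ioi (0 : ℝ), ∫ x in Set.Ioi (0 : ℝ), bnD μ₁ μ₂ σt σs ρ A x y :=
          integral_prod_symm _ hInt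
      _ = 0 := by
          simp [bnD_integral_Ioi_zero (μ₁ := μ₁) (μ₂ := μ₂) hσt hσs hρ1 hρ2 A]
  have hz₂ : ∫ p in Set.Ioi (0 : ℝ) ×ˢ Set.Ioi (0 : ℝ),
      bnD μ₂ μ₁ σs σt ρ B p.2 p.1 = 0 := by
    have hInt : Integrable (fun p : ℝ × ℝ => bnD μ₂ μ₁ σs σt ρ B p.2 p.1)
        ((volume.restrict (Set.Ioi 0)).prod (volume.restrict (Set.Ioi 0))) := by
      rw [MeasureTheory.Measure.prod_restrict, ← MeasureTheory.Measure.volume_eq_prod]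
      exact hint₂.integrableOn
    calc ∫ p in Set.Ioi (0 : ℝ) ×ˢ Set.Ioi (0 : ℝ), bnD μ₂ μ₁ σs σt ρ B p.2 p.1
        = ∫ p, bnD μ₂ μ₁ σs σt ρ B p.2 p.1
            ∂((volume.restrict (Set.Ioi 0)).prod (volume.restrict (Set.Ioi 0))) := by
          rw [MeasureTheory.Measure.prod_restrict, ← MeasureTheory.Measure.volume_eq_prod]
      _ = ∫ x in Set.Ioi (0 : ℝ), ∫ y in Set.Ioi (0 : ℝ), bnD μ₂ μ₁ σs σt ρ B y x :=
          integral_prod _ hInt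
      _ = 0 := by
          simp [bnD_integral_Ioi_zero (μ₁ := μ₂) (μ₂ := μ₁) hσs hσt hρ1 hρ2 B]
  rw [hz₁, hz₂]
  simp
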